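/- arXiv:0911.5211 — 4 statements merged into one kernel-verified Lean document; each statement's English description precedes it below -/
import Mathlib

section
/- Let a and b be positive integers with gcd(a,b) = 1. Let (x,y,z) and (x',y',z') be triples of complex numbers with x ≠ 0, z ≠ 0, x' ≠ 0 and z' ≠ 0. If the ℂ-linear span in ℂ⁴ of the two vectors (x^a, y^a, z^a, x^a) and (z^b, x^b, y^b, 0) equals the ℂ-linear span in ℂ⁴ of the two vectors (x'^a, y'^a, z'^a, x'^a) and (z'^b, x'^b, y'^b, 0), then there exists a nonzero λ ∈ ℂ with (x', y', z') = (λ·x, λ·y, λ·z). -/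
lemma aux_root_eq_one (a b : ℕ) (hab : Nat.gcd a b = 1)
    (u : ℂ) (hu : u ≠ 0) (h1 : u ^ a = 1) (h2 : u ^ b = 1) : u = 1 := by
  have key : u ^ ((a : ℤ) * Nat.gcdA a b + (b : ℤ) * Nat.gcdB a b) = 1 := by
    rw [zpow_add₀ hu, zpow_mul, zpow_mul, zpow_natCast, zpow_natCast, h1, h2,
      one_zpow, one_zpow, one_mul]
  rw [← Nat.gcd_eq_gcd_ab, hab] at key
  simpa using key

lemma aux_ratio (a b : ℕ) (ha : a ≠ 0) (hab : Nat.gcd a b = 1) (t w w' : ℂ)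
    (htne : t ≠ 0) (hw : w ≠ 0) (h1 : w' ^ a = t ^ a * w ^ a)
    (h2 : w' ^ b = t ^ b * w ^ b) : w' = t * w := by
  have hne : (t * w) ≠ 0 := mul_ne_zero htne hw
  have hw' : w' ≠ 0 := by
    intro h0
    rw [h0, zero_pow ha] at h1
    exact mul_ne_zero (pow_ne_zero _ htne) (pow_ne_zero _ hw) h1.symm
  have hua : (w' / (t * w)) ^ a = 1 := by
    rw [div_pow, mul_pow, div_eq_one_iff_eq (mul_ne_zero (pow_ne_zero _ htne)
      (pow_ne_zero _ hw)), h1]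
  have hub : (w' / (t * w)) ^ b = 1 := by
    rw [div_pow, mul_pow, div_eq_one_iff_eq (mul_ne_zero (pow_ne_zero _ htne)
      (pow_ne_zero _ hw)), h2]
  have := aux_root_eq_one a b hab _ (div_ne_zero hw' hne) hua hub
  rwa [div_eq_one_iff_eq hne] at this

/-- Proposition 3.12 (injectivity on the open set {x ≠ 0, z ≠ 0}): for coprime
positive integers `a`, `b`, if the spans of the two rows of the matrices at
`(x,y,z)` and `(x',y',z')` coincide, then the triples are proportional. -/
theorem stmt_0 (a b : ℕ) (ha : 0 < a) (hb : 0 < b) (hab : Nat.gcd a b = 1)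
    (x y z x' y' z' : ℂ) (hx : x ≠ 0) (hz : z ≠ 0) (hx' : x' ≠ 0) (hz' : z' ≠ 0)
    (h : Submodule.span ℂ ({![x ^ a, y ^ a, z ^ a, x ^ a], ![z ^ b, x ^ b, y ^ b, 0]} :
            Set (Fin 4 → ℂ)) =
         Submodule.span ℂ ({![x' ^ a, y' ^ a, z' ^ a, x' ^ a], ![z' ^ b, x' ^ b, y' ^ b, 0]} :
            Set (Fin 4 → ℂ))) :
    ∃ l : ℂ, l ≠ 0 ∧ x' = l * x ∧ y' = l * y ∧ z' = l * z := by
  have m1 : ![x' ^ a, y' ^ a, z' ^ a, x' ^ a] ∈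
      Submodule.span ℂ ({![x ^ a, y ^ a, z ^ a, x ^ a], ![z ^ b, x ^ b, y ^ b, 0]} :
        Set (Fin 4 → ℂ)) := by
    rw [h]; exact Submodule.subset_span (Set.mem_insert _ _)
  have m2 : ![z' ^ b, x' ^ b, y' ^ b, 0] ∈
      Submodule.span ℂ ({![x ^ a, y ^ a, z ^ a, x ^ a], ![z ^ b, x ^ b, y ^ b, 0]} :
        Set (Fin 4 → ℂ)) := by
    rw [h]; exact Submodule.subset_span (Set.mem_insert_of_mem _ rfl)
  rw [Submodule.mem_span_pair] at m1 m2
  obtain ⟨c, d, hcd⟩ := m1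
  obtain ⟨e, f, hef⟩ := m2
  have c0 := congrFun hcd 0
  have c1 := congrFun hcd 1
  have c2 := congrFun hcd 2
  have c3 := congrFun hcd 3
  simp at c0 c1 c2 c3
  have e0 := congrFun hef 0
  have e1 := congrFun hef 1
  have e2 := congrFun hef 2
  have e3 := congrFun hef 3
  simp at e0 e1 e2 e3
  have hxa : x ^ a ≠ 0 := pow_ne_zero _ hx
  have hxb : x ^ b ≠ 0 := pow_ne_zero _ hx
  have he : e = 0 := by
    rcases e3 with h' | h'
    · exact h'
    · exact absurd h'.1 hx
  have hd : d = 0 := by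
    have hd0 : d * z ^ b = 0 := by
      rw [c3] at c0
      linear_combination c0
    rcases mul_eq_zero.mp hd0 with h' | h'
    · exact h'
    · exact absurd h' (pow_ne_zero _ hz)
  subst hd he
  simp only [zero_mul, add_zero, zero_add] at c0 c1 c2 c3 e0 e1 e2
  set t : ℂ := x' / x with ht
  have htne : t ≠ 0 := div_ne_zero hx' hx
  have hta : c = t ^ a := by rw [ht, div_pow, eq_div_iff hxa]; linear_combination c3
  have htb : f = t ^ b := by rw [ht, div_pow, eq_div_iff hxb]; linear_combination e1
  refine ⟨t, htne, ?_, ?_, ?_⟩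
  · rw [ht]; field_simp
  · by_cases hy : y = 0
    · have : y' ^ a = 0 := by rw [← c1, hy, zero_pow (by omega : a ≠ 0), mul_zero]
      have : y' = 0 := pow_eq_zero_iff (by omega : a ≠ 0) |>.mp this
      rw [this, hy, mul_zero]
    · exact aux_ratio a b (by omega) hab t y y' htne hy (by rw [← c1, hta]) (by rw [← e2, htb])
  · exact aux_ratio a b (by omega) hab t z z' htne hz (by rw [← c2, hta]) (by rw [← e0, htb])
end

section
/- Let n ≥ 1 be an integer and let (x,y,z) and (x',y',z') be nonzero triples of complex numbers. If the ℂ-linear span in ℂ⁴ of the two vectors (x, y, z, x) and (z^n, x^n, y^n, 0) equals the ℂ-linear span in ℂ⁴ of the two vectors (x', y', z', x') and (z'^n, x'^n, y'^n, 0), then there exists a nonzero λ ∈ ℂ with (x', y', z') = (λ·x, λ·y, λ·z). -/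
/-- Remark 3.13: for `n ≥ 1`, the morphism `f_n : ℙ² → Gr(2, ℂ⁴)` given by the matrix
with rows `(x, y, z, x)` and `(zⁿ, xⁿ, yⁿ, 0)` is one to one onto its image. -/
theorem stmt_1 (n : ℕ) (hn : 1 ≤ n)
    (x y z x' y' z' : ℂ) (hxyz : (x, y, z) ≠ (0, 0, 0)) (hxyz' : (x', y', z') ≠ (0, 0, 0))
    (h : Submodule.span ℂ ({![x, y, z, x], ![z ^ n, x ^ n, y ^ n, 0]} : Set (Fin 4 → ℂ)) =
         Submodule.span ℂ ({![x', y', z', x'], ![z' ^ n, x' ^ n, y' ^ n, 0]} :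
            Set (Fin 4 → ℂ))) :
    ∃ l : ℂ, l ≠ 0 ∧ x' = l * x ∧ y' = l * y ∧ z' = l * z := by
  have hn0 : n ≠ 0 := by omega
  have hv' : ![x', y', z', x'] ∈ Submodule.span ℂ
      ({![x, y, z, x], ![z ^ n, x ^ n, y ^ n, 0]} : Set (Fin 4 → ℂ)) := by
    rw [h]; exact Submodule.subset_span (Set.mem_insert _ _)
  have hv : ![x, y, z, x] ∈ Submodule.span ℂ
      ({![x', y', z', x'], ![z' ^ n, x' ^ n, y' ^ n, 0]} : Set (Fin 4 → ℂ)) := by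
    rw [← h]; exact Submodule.subset_span (Set.mem_insert _ _)
  rw [Submodule.mem_span_pair] at hv hv'
  obtain ⟨a, b, hab⟩ := hv'
  obtain ⟨a', b', hab'⟩ := hv
  have A0 := congrFun hab 0
  have A1 := congrFun hab 1
  have A2 := congrFun hab 2
  have A3 := congrFun hab 3
  have B0 := congrFun hab' 0
  have B1 := congrFun hab' 1
  have B2 := congrFun hab' 2
  have B3 := congrFun hab' 3
  simp at A0 A1 A2 A3 B0 B1 B2 B3
  simp [Prod.ext_iff] at hxyz hxyz'
  have hbz : b * z ^ n = 0 := by linear_combination A0 - A3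
  have hbz' : b' * z' ^ n = 0 := by linear_combination B0 - B3
  by_cases hz : z = 0
  · subst hz
    by_cases hz' : z' = 0
    · subst hz'
      by_cases hy : y = 0
      · subst hy
        by_cases hy' : y' = 0
        · subst hy'
          have hx : x ≠ 0 := fun h0 => hxyz h0 rfl rfl
          have hx' : x' ≠ 0 := fun h0 => hxyz' h0 rfl rfl
          have ha : a ≠ 0 := fun h0 => hx' (by rw [← A3, h0, zero_mul])
          exact ⟨a, ha, A3.symm, by ring, by ring⟩
        · -- y = 0, y' ≠ 0 : contradiction
          exfalso
          have hx : x ≠ 0 := fun h0 => hxyz h0 rfl rfl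
          have hb' : b' = 0 := by
            rcases mul_eq_zero.1 (show b' * y' ^ n = 0 by linear_combination B2) with h0 | h0
            · exact h0
            · exact absurd ((pow_eq_zero_iff hn0).1 h0) hy'
          have ha' : a' = 0 := by
            rcases mul_eq_zero.1 (show a' * y' = 0 by linear_combination B1 - x' ^ n * hb')
              with h0 | h0
            · exact h0
            · exact absurd h0 hy'
          exact hx (by linear_combination x' * ha' - B3)
      · -- y ≠ 0 : b = 0
        have hb : b = 0 := by
          rcases mul_eq_zero.1 (show b * y ^ n = 0 by linear_combination A2) with h0 | h0
          · exact h0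
          · exact absurd ((pow_eq_zero_iff hn0).1 h0) hy
        have ha : a ≠ 0 := fun h0 =>
          hxyz' (by linear_combination x * h0 - A3) (by linear_combination x ^ n * hb + y * h0 - A1) rfl
        exact ⟨a, ha, A3.symm, by linear_combination -A1 + x ^ n * hb, by ring⟩
    · -- z = 0, z' ≠ 0 : contradiction
      exfalso
      have hb' : b' = 0 := by
        rcases mul_eq_zero.1 hbz' with h0 | h0
        · exact h0
        · exact absurd ((pow_eq_zero_iff hn0).1 h0) hz'
      have ha' : a' = 0 := by
        rcases mul_eq_zero.1 (show a' * z' = 0 by linear_combination B2 - y' ^ n * hb')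
          with h0 | h0
        · exact h0
        · exact absurd h0 hz'
      exact hxyz (by linear_combination x' * ha' - B3)
        (by linear_combination y' * ha' + x' ^ n * hb' - B1) rfl
  · -- z ≠ 0 : b = 0, done
    have hb : b = 0 := by
      rcases mul_eq_zero.1 hbz with h0 | h0
      · exact h0
      · exact absurd ((pow_eq_zero_iff hn0).1 h0) hz
    have ha : a ≠ 0 := fun h0 =>
      hxyz' (by linear_combination x * h0 - A3) (by linear_combination x ^ n * hb + y * h0 - A1)
        (by linear_combination y ^ n * hb + z * h0 - A2)
    exact ⟨a, ha, A3.symm, by linear_combination -A1 + x ^ n * hb,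
      by linear_combination -A2 + y ^ n * hb⟩
end

section
/- Let a and b be positive integers. For every triple (x,y,z) of complex numbers with (x,y,z) ≠ (0,0,0), the four vectors (x^a, z^b), (y^a, x^b), (z^a, y^b), (x^a, 0) span ℂ² as a ℂ-vector space. -/
lemma span_eq_top_of_axes (S : Submodule ℂ (Fin 2 → ℂ)) (c d : ℂ)
    (hc : c ≠ 0) (hd : d ≠ 0) (h1 : ![c, 0] ∈ S) (h2 : ![(0:ℂ), d] ∈ S) :
    S = ⊤ := by
  rw [eq_top_iff]
  intro v _
  have : v = (v 0 / c) • ![c, 0] + (v 1 / d) • ![(0:ℂ), d] := by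
    funext i
    fin_cases i <;> simp <;> field_simp
  rw [this]
  exact S.add_mem (S.smul_mem _ h1) (S.smul_mem _ h2)

/-- Example 2.6: for positive integers `a`, `b` and any nonzero `(x,y,z) ∈ ℂ³`, the four
vectors `(xᵃ, zᵇ)`, `(yᵃ, xᵇ)`, `(zᵃ, yᵇ)`, `(xᵃ, 0)` span `ℂ²`. -/
theorem stmt_2 (a b : ℕ) (ha : 0 < a) (hb : 0 < b)
    (x y z : ℂ) (hxyz : (x, y, z) ≠ (0, 0, 0)) :
    Submodule.span ℂ ({![x ^ a, z ^ b], ![y ^ a, x ^ b], ![z ^ a, y ^ b], ![x ^ a, 0]} :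
        Set (Fin 2 → ℂ)) = ⊤ := by
  set S := Submodule.span ℂ ({![x ^ a, z ^ b], ![y ^ a, x ^ b], ![z ^ a, y ^ b], ![x ^ a, 0]} :
      Set (Fin 2 → ℂ)) with hS
  have hs1 : ![x ^ a, z ^ b] ∈ S := Submodule.subset_span (by simp)
  have hs2 : ![y ^ a, x ^ b] ∈ S := Submodule.subset_span (by simp)
  have hs3 : ![z ^ a, y ^ b] ∈ S := Submodule.subset_span (by simp)
  have hs4 : ![x ^ a, 0] ∈ S := Submodule.subset_span (by simp)
  have hdiff : ![(0:ℂ), z ^ b] ∈ S := by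
    have := S.sub_mem hs1 hs4
    have he : ![x ^ a, z ^ b] - ![x ^ a, 0] = ![(0:ℂ), z ^ b] := by
      funext i; fin_cases i <;> simp
    rwa [he] at this
  by_cases hx : x ≠ 0
  · -- e0 from s4, e1 from s2 - (y^a/x^a) • s4
    have hxa : x ^ a ≠ 0 := pow_ne_zero _ hx
    have h2' : ![(0:ℂ), x ^ b] ∈ S := by
      have := S.sub_mem hs2 (S.smul_mem (y ^ a / x ^ a) hs4)
      have he : ![y ^ a, x ^ b] - (y ^ a / x ^ a) • ![x ^ a, 0] = ![(0:ℂ), x ^ b] := by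
        funext i; fin_cases i <;> simp <;> field_simp <;> simp
      rwa [he] at this
    exact span_eq_top_of_axes S _ _ hxa (pow_ne_zero _ hx) hs4 h2'
  · push_neg at hx
    by_cases hz : z ≠ 0
    · -- e1 from hdiff, e0 from s3 - (y^b/z^b) • hdiff
      have h1' : ![z ^ a, 0] ∈ S := by
        have := S.sub_mem hs3 (S.smul_mem (y ^ b / z ^ b) hdiff)
        have he : ![z ^ a, y ^ b] - (y ^ b / z ^ b) • ![(0:ℂ), z ^ b] = ![z ^ a, 0] := by
          funext i; fin_cases i <;> simp <;> field_simp <;> simp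
        rwa [he] at this
      exact span_eq_top_of_axes S _ _ (pow_ne_zero _ hz) (pow_ne_zero _ hz) h1' hdiff
    · push_neg at hz
      have hy : y ≠ 0 := by
        intro hy; exact hxyz (by simp [hx, hy, hz])
      have hs2' : ![y ^ a, 0] ∈ S := by
        have he : ![y ^ a, x ^ b] = ![y ^ a, 0] := by
          funext i; fin_cases i <;> simp [hx, zero_pow hb.ne']
        rwa [he] at hs2
      have hs3' : ![(0:ℂ), y ^ b] ∈ S := by
        have he : ![z ^ a, y ^ b] = ![(0:ℂ), y ^ b] := by
          funext i; fin_cases i <;> simp [hz, zero_pow ha.ne']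
        rwa [he] at hs3
      exact span_eq_top_of_axes S _ _ (pow_ne_zero _ hy) (pow_ne_zero _ hy) hs2' hs3'
end

section
/- Let c ≥ 3 be an integer and let S be a finite set of nonzero vectors in ℂ³ that are pairwise non-proportional (i.e., no element of S is a complex scalar multiple of another), with the cardinality of S at most c − 2. Then the ℂ-linear map which sends a homogeneous polynomial F of degree c − 3 in ℂ[X,Y,Z] to the function S → ℂ, p ↦ F(p) (evaluation of F at the coordinates of p), is surjective onto the space of all functions from S to ℂ. -/
open MvPolynomial

noncomputable def linPoly (a : Fin 3 → ℂ) : MvPolynomial (Fin 3) ℂ :=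
  ∑ i, C (a i) * X i

lemma linPoly_homog (a : Fin 3 → ℂ) : (linPoly a).IsHomogeneous 1 := by
  apply IsHomogeneous.sum
  intro i _
  exact (isHomogeneous_X _ _).C_mul _

lemma eval_linPoly (a w : Fin 3 → ℂ) : eval w (linPoly a) = ∑ i, a i * w i := by
  simp [linPoly]

/-- separation: a linear form vanishing at q, nonzero at p -/
lemma sep (p q : Fin 3 → ℂ) (hq : ∀ l : ℂ, p ≠ l • q) :
    ∃ a : Fin 3 → ℂ, eval q (linPoly a) = 0 ∧ eval p (linPoly a) ≠ 0 := by
  have hpmem : p ∉ Submodule.span ℂ {q} := by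
    rw [Submodule.mem_span_singleton]
    rintro ⟨l, rfl⟩
    exact hq l rfl
  obtain ⟨f, hfp, hfq⟩ := Submodule.exists_dual_map_eq_bot_of_notMem hpmem inferInstance
  refine ⟨fun i => f (fun j => if i = j then 1 else 0), ?_, ?_⟩
  · rw [eval_linPoly]
    have : f q = 0 := by
      have : f q ∈ Submodule.map f (Submodule.span ℂ {q}) :=
        Submodule.mem_map_of_mem (Submodule.mem_span_singleton_self q)
      rw [hfq] at this
      simpa using this
    have h2 := LinearMap.pi_apply_eq_sum_univ f q
    rw [this] at h2
    simpa [mul_comm] using h2.symm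
  · rw [eval_linPoly]
    rw [LinearMap.pi_apply_eq_sum_univ f p] at hfp
    simpa [mul_comm] using hfp

/-- The key claim in the proof of Theorem 3.7: for a set `S` of at most `c − 2` pairwise
non-proportional nonzero points of `ℂ³`, evaluation of homogeneous polynomials of degree
`c − 3` at the points of `S` is surjective onto the functions `S → ℂ`. -/
theorem stmt_6 (c : ℕ) (hc : 3 ≤ c) (S : Finset (Fin 3 → ℂ))
    (hS0 : ∀ p ∈ S, p ≠ 0)
    (hSprop : ∀ p ∈ S, ∀ q ∈ S, p ≠ q → ∀ l : ℂ, q ≠ l • p)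
    (hcard : S.card ≤ c - 2) :
    ∀ g : S → ℂ, ∃ F : MvPolynomial (Fin 3) ℂ,
      F ∈ homogeneousSubmodule (Fin 3) ℂ (c - 3) ∧ ∀ p : S, eval (p : Fin 3 → ℂ) F = g p := by
  have key : ∀ p ∈ S, ∃ B : MvPolynomial (Fin 3) ℂ, B.IsHomogeneous (c - 3) ∧
      eval p B ≠ 0 ∧ ∀ q ∈ S, q ≠ p → eval q B = 0 := by
    intro p hp
    have hsep : ∀ q ∈ S.erase p, ∃ a : Fin 3 → ℂ,
        eval q (linPoly a) = 0 ∧ eval p (linPoly a) ≠ 0 := by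
      intro q hq
      obtain ⟨hne, hqS⟩ := Finset.mem_erase.mp hq
      exact sep p q (fun l => hSprop q hqS p hp hne l)
    choose a ha using hsep
    obtain ⟨i0, hi0⟩ := Function.ne_iff.mp (hS0 p hp)
    have hcard' : (S.erase p).card ≤ c - 3 := by
      rw [Finset.card_erase_of_mem hp]
      omega
    set k : ℕ := (c - 3) - (S.erase p).card with hk
    refine ⟨(∏ q ∈ (S.erase p).attach, linPoly (a q.1 q.2)) * X i0 ^ k, ?_, ?_, ?_⟩
    · have h1 : (∏ q ∈ (S.erase p).attach, linPoly (a q.1 q.2)).IsHomogeneous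
          (S.erase p).card := by
        have := IsHomogeneous.prod (S.erase p).attach (fun q => linPoly (a q.1 q.2))
          (fun _ => 1) (fun q _ => linPoly_homog _)
        simpa using this
      have h2 := h1.mul (isHomogeneous_X_pow (R := ℂ) i0 k)
      have : (S.erase p).card + k = c - 3 := by omega
      rwa [this] at h2
    · rw [map_mul]
      apply mul_ne_zero
      · rw [map_prod]
        exact Finset.prod_ne_zero_iff.mpr (fun q _ => (ha q.1 q.2).2)
      · simp only [map_pow, eval_X]
        exact pow_ne_zero _ (by simpa using hi0)
    · intro q hqS hqp
      have hq : q ∈ S.erase p := Finset.mem_erase.mpr ⟨hqp, hqS⟩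
      rw [map_mul, map_prod]
      rw [Finset.prod_eq_zero (Finset.mem_attach _ ⟨q, hq⟩) (ha q hq).1, zero_mul]
  choose! B hB using key
  intro g
  refine ⟨∑ p ∈ S.attach, C (g p / eval p.1 (B p.1)) * B p.1, ?_, ?_⟩
  · rw [mem_homogeneousSubmodule]
    exact IsHomogeneous.sum _ _ _ (fun p _ => ((hB p.1 p.2).1).C_mul _)
  · intro r
    rw [map_sum]
    rw [Finset.sum_eq_single_of_mem r (Finset.mem_attach _ r)]
    · rw [map_mul, eval_C, div_mul_cancel₀ _ (hB r.1 r.2).2.1]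
    · intro p _ hpr
      rw [map_mul, eval_C, (hB p.1 p.2).2.2 r.1 r.2 (fun h => hpr (Subtype.ext h.symm)),
        mul_zero]
end
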